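/- The universe size number of the complete bipartite graph K_{s,t} equals (1 + ⌈log₂ s⌉) + (1 + ⌈log₂ t⌉) for s, t ≥ 2. -/

import Mathlib

/-- A disjointness labelling of `G`: an injective assignment of nonempty
finite subsets of the universe `U` to vertices, such that two distinct
vertices are adjacent iff their labels are disjoint. -/
def IsDisjLabelling {V U : Type*} (G : SimpleGraph V) (ℓ : V → Finset U) : Prop :=
  Function.Injective ℓ ∧ (∀ v, (ℓ v).Nonempty) ∧
    ∀ u v : V, u ≠ v → (G.Adj u v ↔ Disjoint (ℓ u) (ℓ v))

/-- The universe size number: the minimum size of a universe admitting a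
disjointness labelling of `G`. -/
noncomputable def USN {V : Type*} (G : SimpleGraph V) : ℕ :=
  sInf {m : ℕ | ∃ ℓ : V → Finset (Fin m), IsDisjLabelling G ℓ}

/-- Counting lemma: `n` distinct pairwise-nondisjoint subsets of `A` force `2*n ≤ 2^|A|`. -/
lemma intersecting_card_le {U : Type*} [DecidableEq U] {n : ℕ} (g : Fin n → Finset U)
    (A : Finset U) (hinj : Function.Injective g) (hsub : ∀ i, g i ⊆ A)
    (hint : ∀ i j, ¬ Disjoint (g i) (g j)) : 2 * n ≤ 2 ^ A.card := by
  classical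
  set S : Finset (Finset U) := Finset.image g Finset.univ with hS
  set S' : Finset (Finset U) := Finset.image (fun i => A \ g i) Finset.univ with hS'
  have hinj' : Function.Injective (fun i => A \ g i) := by
    intro i j hij
    apply hinj
    have := congrArg (A \ ·) hij
    simpa [Finset.sdiff_sdiff_eq_self (hsub i), Finset.sdiff_sdiff_eq_self (hsub j)] using this
  have hcS : S.card = n := by
    rw [hS, Finset.card_image_of_injective _ hinj, Finset.card_univ, Fintype.card_fin]
  have hcS' : S'.card = n := by
    rw [hS', Finset.card_image_of_injective _ hinj', Finset.card_univ, Fintype.card_fin]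
  have hdisj : Disjoint S S' := by
    rw [Finset.disjoint_left]
    rintro x hx hx'
    simp only [hS, hS', Finset.mem_image, Finset.mem_univ, true_and] at hx hx'
    obtain ⟨i, hi⟩ := hx
    obtain ⟨j, hj⟩ := hx'
    apply hint i j
    rw [hi, ← hj]
    exact Finset.sdiff_disjoint
  have hsubP : S ∪ S' ⊆ A.powerset := by
    intro x hx
    rw [Finset.mem_union] at hx
    rw [Finset.mem_powerset]
    rcases hx with hx | hx <;>
      · simp only [hS, hS', Finset.mem_image, Finset.mem_univ, true_and] at hx
        obtain ⟨i, hi⟩ := hx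
        subst hi
        first
        | exact hsub i
        | exact Finset.sdiff_subset
  calc 2 * n = (S ∪ S').card := by
        rw [Finset.card_union_of_disjoint hdisj, hcS, hcS']; ring
    _ ≤ A.powerset.card := Finset.card_le_card hsubP
    _ = 2 ^ A.card := Finset.card_powerset A

lemma map_labelling {V U W : Type*} {G : SimpleGraph V} {ℓ : V → Finset U}
    (h : IsDisjLabelling G ℓ) (e : U ↪ W) :
    IsDisjLabelling G (fun v => (ℓ v).map e) := by
  obtain ⟨h1, h2, h3⟩ := h
  refine ⟨fun u v huv => h1 (Finset.map_injective e huv), fun v => Finset.Nonempty.map (h2 v), ?_⟩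
  intro u v huv
  rw [h3 u v huv, Finset.disjoint_map]

theorem stmt8 (s t : ℕ) (hs : 2 ≤ s) (ht : 2 ≤ t) :
    USN (completeBipartiteGraph (Fin s) (Fin t)) =
      (1 + Nat.clog 2 s) + (1 + Nat.clog 2 t) := by
  classical
  set a := Nat.clog 2 s with ha
  set b := Nat.clog 2 t with hb
  set m := (1 + a) + (1 + b) with hm
  -- Upper bound: construct a labelling into Fin m
  have hupper : ∃ ℓ : (Fin s ⊕ Fin t) → Finset (Fin m),
      IsDisjLabelling (completeBipartiteGraph (Fin s) (Fin t)) ℓ := by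
    obtain ⟨f⟩ : Nonempty (Fin s ↪ Finset (Fin a)) := by
      apply Function.Embedding.nonempty_of_card_le
      simpa [Fintype.card_finset] using Nat.le_pow_clog (by norm_num) s
    obtain ⟨g⟩ : Nonempty (Fin t ↪ Finset (Fin b)) := by
      apply Function.Embedding.nonempty_of_card_le
      simpa [Fintype.card_finset] using Nat.le_pow_clog (by norm_num) t
    -- universe : Option (Fin a) ⊕ Option (Fin b)
    set U := Option (Fin a) ⊕ Option (Fin b) with hU
    obtain ⟨e⟩ : Nonempty (U ↪ Fin m) := by
      apply Function.Embedding.nonempty_of_card_le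
      simp [hU, hm]; omega
    set ℓ0 : (Fin s ⊕ Fin t) → Finset U := fun v =>
      Sum.elim
        (fun i => (insert none ((f i).map Function.Embedding.some)).map .inl)
        (fun j => (insert none ((g j).map Function.Embedding.some)).map .inr) v
      with hℓ0
    have hlab : IsDisjLabelling (completeBipartiteGraph (Fin s) (Fin t)) ℓ0 := by
      have hmemL : ∀ i, (Sum.inl none : U) ∈ ℓ0 (.inl i) := by
        intro i; simp [hℓ0, Function.Embedding.inl]; left; rfl
      have hmemR : ∀ j, (Sum.inr none : U) ∈ ℓ0 (.inr j) := by
        intro j; simp [hℓ0, Function.Embedding.inr]; left; rfl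
      have hshape : ∀ i x, x ∈ ℓ0 (.inl i) → ∃ y, x = Sum.inl y := by
        intro i x hx
        simp only [hℓ0, Sum.elim_inl, Finset.mem_map] at hx
        obtain ⟨y, _, hy⟩ := hx
        exact ⟨y, hy.symm⟩
      have hshape' : ∀ j x, x ∈ ℓ0 (.inr j) → ∃ y, x = Sum.inr y := by
        intro j x hx
        simp only [hℓ0, Sum.elim_inr, Finset.mem_map] at hx
        obtain ⟨y, _, hy⟩ := hx
        exact ⟨y, hy.symm⟩
      have hLR : ∀ i j, Disjoint (ℓ0 (.inl i)) (ℓ0 (.inr j)) := by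
        intro i j
        rw [Finset.disjoint_left]
        intro x hx hx'
        obtain ⟨y, hy⟩ := hshape i x hx
        obtain ⟨z, hz⟩ := hshape' j x hx'
        rw [hy] at hz; exact Sum.inl_ne_inr hz
      constructor
      · -- injective
        rintro (i | j) (i' | j') hij
        · congr 1
          apply f.injective
          simp only [hℓ0, Sum.elim_inl] at hij
          have h2 := Finset.map_injective _ hij
          have hni : none ∉ (f i).map Function.Embedding.some := by simp
          have hni' : none ∉ (f i').map Function.Embedding.some := by simp
          have := congrArg (Finset.erase · none) h2
          simp only [Finset.erase_insert hni, Finset.erase_insert hni'] at this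
          exact Finset.map_injective _ this
        · exact absurd (hij ▸ hmemL i) (fun h => by
            obtain ⟨y, hy⟩ := hshape' j' _ h; exact Sum.inl_ne_inr hy)
        · exact absurd (hij ▸ hmemR j) (fun h => by
            obtain ⟨y, hy⟩ := hshape i' _ h
            exact Sum.inl_ne_inr hy.symm)
        · congr 1
          apply g.injective
          simp only [hℓ0, Sum.elim_inr] at hij
          have h2 := Finset.map_injective _ hij
          have hni : none ∉ (g j).map Function.Embedding.some := by simp
          have hni' : none ∉ (g j').map Function.Embedding.some := by simp
          have := congrArg (Finset.erase · none) h2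
          simp only [Finset.erase_insert hni, Finset.erase_insert hni'] at this
          exact Finset.map_injective _ this
      constructor
      · rintro (i | j)
        · exact ⟨_, hmemL i⟩
        · exact ⟨_, hmemR j⟩
      · rintro (i | j) (i' | j') hne
        · constructor
          · intro hadj; exact absurd hadj (by simp)
          · intro hd
            exact absurd (hmemL i') (Finset.disjoint_left.mp hd (hmemL i))
        · exact ⟨fun _ => hLR i j', fun _ => by simp⟩
        · exact ⟨fun _ => (hLR i' j).symm, fun _ => by simp⟩
        · constructor
          · intro hadj; exact absurd hadj (by simp)
          · intro hd
            exact absurd (hmemR j') (Finset.disjoint_left.mp hd (hmemR j))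
    exact ⟨fun v => (ℓ0 v).map e, map_labelling hlab e⟩
  -- Lower bound
  have hlower : ∀ m' : ℕ, (∃ ℓ : (Fin s ⊕ Fin t) → Finset (Fin m'),
      IsDisjLabelling (completeBipartiteGraph (Fin s) (Fin t)) ℓ) → m ≤ m' := by
    rintro m' ⟨ℓ, h1, h2, h3⟩
    set A : Finset (Fin m') := Finset.univ.biUnion (fun i : Fin s => ℓ (.inl i)) with hA
    set B : Finset (Fin m') := Finset.univ.biUnion (fun j : Fin t => ℓ (.inr j)) with hB
    have hadj : ∀ (i : Fin s) (j : Fin t), Disjoint (ℓ (.inl i)) (ℓ (.inr j)) := by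
      intro i j
      rw [← h3 _ _ (by simp)]
      simp
    have hAB : Disjoint A B := by
      rw [Finset.disjoint_left]
      intro x hx hx'
      simp only [hA, hB, Finset.mem_biUnion, Finset.mem_univ, true_and] at hx hx'
      obtain ⟨i, hi⟩ := hx
      obtain ⟨j, hj⟩ := hx'
      exact Finset.disjoint_left.mp (hadj i j) hi hj
    have key : ∀ (k : ℕ) (C : Finset (Fin m')) (φ : Fin k → Fin s ⊕ Fin t),
        2 ≤ k → Function.Injective φ → (∀ i, ℓ (φ i) ⊆ C) →
        (∀ i j, i ≠ j → ¬ (completeBipartiteGraph (Fin s) (Fin t)).Adj (φ i) (φ j)) →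
        1 + Nat.clog 2 k ≤ C.card := by
      intro k C φ hk hφinj hφsub hφadj
      have hint : ∀ i j, ¬ Disjoint (ℓ (φ i)) (ℓ (φ j)) := by
        intro i j
        rcases eq_or_ne i j with rfl | hij
        · rw [Finset.disjoint_self_iff_empty]
          exact fun h => by simpa [h] using h2 (φ i)
        · rw [← h3 _ _ (fun h => hij (hφinj h))]
          exact hφadj i j hij
      have h2k : 2 * k ≤ 2 ^ C.card :=
        intersecting_card_le (fun i => ℓ (φ i)) C (fun i j hij => hφinj (h1 hij))
          hφsub hint
      rcases Nat.eq_zero_or_pos C.card with hc | hc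
      · rw [hc] at h2k; omega
      · obtain ⟨c, hc'⟩ := Nat.exists_eq_add_of_le hc
        rw [hc', add_comm, pow_succ] at h2k
        have : k ≤ 2 ^ c := by omega
        rw [← Nat.clog_le_iff_le_pow (by norm_num)] at this
        omega
    have hAcard : 1 + a ≤ A.card := by
      refine key s A (fun i => .inl i) hs (fun i j h => by simpa using h)
        (fun i => Finset.subset_biUnion_of_mem (fun i : Fin s => ℓ (.inl i)) (Finset.mem_univ i)) ?_
      intro i j hij
      simp
    have hBcard : 1 + b ≤ B.card := by
      refine key t B (fun j => .inr j) ht (fun i j h => by simpa using h)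
        (fun j => Finset.subset_biUnion_of_mem (fun j : Fin t => ℓ (.inr j)) (Finset.mem_univ j)) ?_
      intro i j hij
      simp
    have : A.card + B.card ≤ m' := by
      rw [← Finset.card_union_of_disjoint hAB]
      simpa using Finset.card_le_card (Finset.subset_univ (A ∪ B))
    omega
  have hmem : m ∈ {m : ℕ | ∃ ℓ : (Fin s ⊕ Fin t) → Finset (Fin m),
      IsDisjLabelling (completeBipartiteGraph (Fin s) (Fin t)) ℓ} := hupper
  refine le_antisymm (Nat.sInf_le hmem) ?_
  exact hlower _ (Nat.sInf_mem ⟨m, hmem⟩)
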